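/- Let A be the (n+1)-dimensional commutative algebra over a field K of characteristic ≠ 2 with basis {e_0,…,e_n}, products e_0² = e_0 + e_n, e_0 e_i = ½e_i (1 ≤ i ≤ n), all other products zero. Then the linear map d defined by d(e_i) = e_{i+1} (0 ≤ i ≤ n−1), d(e_n) = 0 is a derivation of A satisfying d^{n+1} = 0 and d^n ≠ 0; hence A is dimensionally nilpotent. -/

import Mathlib

/-- The (n+1)-dimensional algebra with e_0² = e_0 + e_n, e_0e_i = ½e_i (1 ≤ i ≤ n)
and all other products zero: the shift map d(e_i) = e_{i+1}, d(e_n) = 0 is a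
derivation with d^{n+1} = 0 and d^n ≠ 0, so the algebra is dimensionally nilpotent. -/
theorem pseudo_gametic_dimensionally_nilpotent {K A : Type*} [Field K]
    [NonUnitalNonAssocCommRing A] [Module K A] [SMulCommClass K A A] [IsScalarTower K A A]
    (h2 : (2 : K) ≠ 0) (n : ℕ)
    (e : Module.Basis (Fin (n + 1)) K A)
    (h00 : e 0 * e 0 = e 0 + e ⟨n, Nat.lt_succ_self n⟩)
    (h0i : ∀ i : Fin (n + 1), 1 ≤ (i : ℕ) → e 0 * e i = (2 : K)⁻¹ • e i)
    (hij : ∀ i j : Fin (n + 1), 1 ≤ (i : ℕ) → 1 ≤ (j : ℕ) → e i * e j = 0)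
    (d : Module.End K A)
    (hdshift : ∀ i : Fin (n + 1), ∀ hi : (i : ℕ) < n,
      d (e i) = e ⟨(i : ℕ) + 1, Nat.succ_lt_succ hi⟩)
    (hdtop : d (e ⟨n, Nat.lt_succ_self n⟩) = 0) :
    (∀ x y : A, d (x * y) = d x * y + x * d y) ∧ d ^ (n + 1) = 0 ∧ d ^ n ≠ 0 := by
  have hhalf : (2 : K)⁻¹ + (2 : K)⁻¹ = 1 := by
    rw [← two_mul, mul_inv_cancel₀ h2]
  -- d of a basis element with positive index, multiplied by another, is zero.
  have hd1 : ∀ i : Fin (n + 1), 1 ≤ (i : ℕ) → ∀ j : Fin (n + 1), 1 ≤ (j : ℕ) →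
      d (e i) * e j = 0 := by
    intro i hi j hj
    rcases lt_or_ge (i : ℕ) n with h | h
    · rw [hdshift i h, hij _ _ (by simp) hj]
    · have hieq : i = ⟨n, Nat.lt_succ_self n⟩ := Fin.ext (show (i:ℕ) = n by have := i.isLt; omega)
      rw [hieq, hdtop, zero_mul]
  -- the mixed case i = 0, j ≥ 1
  have mix : ∀ j : Fin (n + 1), 1 ≤ (j : ℕ) →
      d (e 0 * e j) = d (e 0) * e j + e 0 * d (e j) := by
    intro j hj
    have hn1 : 0 < n := by have := j.isLt; omega
    have hd0 : d (e 0) = e ⟨1, Nat.succ_lt_succ hn1⟩ := by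
      have := hdshift 0 hn1
      simpa using this
    rw [h0i j hj, map_smul, hd0, hij _ _ (by simp) hj, zero_add]
    rcases lt_or_ge (j : ℕ) n with h | h
    · rw [hdshift j h, h0i _ (by simp)]
    · have hjeq : j = ⟨n, Nat.lt_succ_self n⟩ := Fin.ext (show (j:ℕ) = n by have := j.isLt; omega)
      rw [hjeq, hdtop, mul_zero]
      simp
  -- the derivation identity on basis elements
  have key : ∀ i j : Fin (n + 1), d (e i * e j) = d (e i) * e j + e i * d (e j) := by
    intro i j
    rcases Nat.eq_zero_or_pos (i : ℕ) with hi | hi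
    · have hi0 : i = 0 := Fin.ext hi
      subst hi0
      rcases Nat.eq_zero_or_pos (j : ℕ) with hj | hj
      · have hj0 : j = 0 := Fin.ext hj
        subst hj0
        rcases Nat.eq_zero_or_pos n with hn | hn
        · -- n = 0 : d (e 0) = 0
          have h0 : (0 : Fin (n + 1)) = ⟨n, Nat.lt_succ_self n⟩ := Fin.ext (by simp [hn])
          have hd00 : d (e 0) = 0 := by rw [h0]; exact hdtop
          simp [h00, hd00, hdtop]
        · have hd0 : d (e 0) = e ⟨1, Nat.succ_lt_succ hn⟩ := by
            have := hdshift 0 hn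
            simpa using this
          rw [h00, map_add, hdtop, add_zero, hd0, mul_comm (e _) (e 0),
            h0i _ (by simp), ← add_smul, hhalf, one_smul]
      · exact mix j hj
    · rcases Nat.eq_zero_or_pos (j : ℕ) with hj | hj
      · have hj0 : j = 0 := Fin.ext hj
        subst hj0
        rw [mul_comm (e i) (e 0), mix i hi, mul_comm (d (e 0)) (e i),
          mul_comm (e 0) (d (e i)), add_comm]
      · rw [hij i j hi hj, map_zero, hd1 i hi j hj, zero_add,
          mul_comm, hd1 j hj i hi]
  -- extend bilinearly
  have hder : ∀ x y : A, d (x * y) = d x * y + x * d y := by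
    have hB : (LinearMap.mul K A).compr₂ d
        = ((LinearMap.mul K A).comp d) + (LinearMap.mul K A).compl₂ d := by
      apply e.ext; intro i; apply e.ext; intro j
      simpa using key i j
    intro x y
    have := DFunLike.congr_fun (DFunLike.congr_fun hB x) y
    simpa using this
  refine ⟨hder, ?_, ?_⟩
  · -- d ^ (n+1) = 0
    have hpow0 : ∀ k : ℕ, ∀ i : Fin (n + 1), n < (i : ℕ) + k → (d ^ k) (e i) = 0 := by
      intro k
      induction k with
      | zero => intro i h; exact absurd h (by have := i.isLt; omega)
      | succ k ih =>
        intro i h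
        rw [pow_succ, Module.End.mul_apply]
        rcases lt_or_ge (i : ℕ) n with hi | hi
        · rw [hdshift i hi]; exact ih _ (by simp; omega)
        · have hieq : i = ⟨n, Nat.lt_succ_self n⟩ := Fin.ext (show (i:ℕ) = n by have := i.isLt; omega)
          rw [hieq, hdtop, map_zero]
    apply e.ext
    intro i
    simpa using hpow0 (n + 1) i (by omega)
  · -- d ^ n ≠ 0
    have hpown : ∀ k : ℕ, ∀ i : Fin (n + 1), ∀ h : (i : ℕ) + k ≤ n,
        (d ^ k) (e i) = e ⟨(i : ℕ) + k, by omega⟩ := by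
      intro k
      induction k with
      | zero => intro i h; simp
      | succ k ih =>
        intro i h
        rw [pow_succ, Module.End.mul_apply, hdshift i (by omega), ih _ (by simp; omega)]
        congr 1
        ext
        simp
        omega
    intro hzero
    have h1 := hpown n 0 (by simp)
    rw [hzero] at h1
    simp at h1
    exact e.ne_zero _ h1.symm
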